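/- Suppose $\epsilon$ is a real number with $2\epsilon \notin \mathbb{Z}$, and suppose $\alpha, \beta, \gamma, \delta$ are elements of the Weyl algebra (noncommutative polynomials in $a, a^\dagger$ with $[a,a^\dagger]=1$) such that the matrix $Q = \begin{pmatrix}\alpha & \beta \\ \gamma & \delta\end{pmatrix}$ satisfies $\tilde{H}^\epsilon Q = Q H^\epsilon$. Then $Q = 0$. -/
import Mathlib


open Polynomial

noncomputable section

/-- The space of operators on `ℂ[x]`. -/
abbrev E := Module.End ℂ (Polynomial ℂ)

/-- Annihilation operator `a = d/dx`. -/
def opA : E := Polynomial.derivative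

/-- Creation operator `a† = ` multiplication by `x`. -/
def opC : E := LinearMap.mulLeft ℂ (X : Polynomial ℂ)

/-- Parity operator `(𝒫 f)(x) = f(-x)`. -/
def opP : E := (aeval (-X : Polynomial ℂ)).toLinearMap

/-- `2×2` matrices of operators, i.e. operators on `ℂ[x] ⊗ ℂ²`. -/
abbrev M2 := Matrix (Fin 2) (Fin 2) E

/-- The asymmetric quantum Rabi Hamiltonian
`H^ε = a†a + Δ σx + g (a+a†) σz + ε σz`. -/
def Hop (g Δ ε : ℝ) : M2 :=
  !![opC * opA + (g : ℂ) • (opA + opC) + (ε : ℂ) • 1, (Δ : ℂ) • 1;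
     (Δ : ℂ) • 1, opC * opA - (g : ℂ) • (opA + opC) - (ε : ℂ) • 1]

/-- The parity operator `𝒫 ⊗ I` on `ℂ[x] ⊗ ℂ²`. -/
def Pm : M2 := !![opP, 0; 0, opP]

end

noncomputable section

/-- The Weyl algebra `ℂ[a, a†]`, realized as the subalgebra of operators on
`ℂ[x]` generated by `a = d/dx` and `a† = x·` (so `[a, a†] = 1`). -/
def WeylAlg : Subalgebra ℂ E := Algebra.adjoin ℂ {opA, opC}

/-- Elements of the Weyl algebra of degree at most `d`: the span of the
normally ordered monomials `aᵖ(a†)^q` with `p + q ≤ d`. -/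
def weylDegLE (d : ℕ) : Submodule ℂ E :=
  Submodule.span ℂ {T : E | ∃ p q : ℕ, p + q ≤ d ∧ T = opA ^ p * opC ^ q}

/-- Elements of the Weyl algebra of degree strictly less than `ℓ`. -/
def weylDegLT (ℓ : ℕ) : Submodule ℂ E :=
  Submodule.span ℂ {T : E | ∃ p q : ℕ, p + q < ℓ ∧ T = opA ^ p * opC ^ q}

end

noncomputable section
namespace RabiAux
theorem comm_AC : opA * opC = opC * opA + 1 := by
  apply LinearMap.ext; intro f
  simp [opA, opC, Module.End.mul_apply, Polynomial.derivative_mul]; ring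
def d1 (T : E) : E := opA * T - T * opA
def d2 (T : E) : E := opC * T - T * opC
def dd (i j : ℕ) (T : E) : E := d1^[i] (d2^[j] T)
def Nop : E := opC * opA
def Xop : E := opA + opC

theorem comm_AC' : opA * opC - opC * opA = 1 := by rw [comm_AC]; abel

lemma d1_add (S T : E) : d1 (S + T) = d1 S + d1 T := by
  simp only [d1, mul_add, add_mul]; abel
lemma d2_add (S T : E) : d2 (S + T) = d2 S + d2 T := by
  simp only [d2, mul_add, add_mul]; abel
lemma d1_sub (S T : E) : d1 (S - T) = d1 S - d1 T := by
  simp only [d1, mul_sub, sub_mul]; abel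
lemma d2_sub (S T : E) : d2 (S - T) = d2 S - d2 T := by
  simp only [d2, mul_sub, sub_mul]; abel
lemma d1_smul (c : ℂ) (T : E) : d1 (c • T) = c • d1 T := by
  simp only [d1, mul_smul_comm, smul_mul_assoc, smul_sub]
lemma d2_smul (c : ℂ) (T : E) : d2 (c • T) = c • d2 T := by
  simp only [d2, mul_smul_comm, smul_mul_assoc, smul_sub]
lemma d1_zero : d1 0 = 0 := by simp [d1]
lemma d2_zero : d2 0 = 0 := by simp [d2]
lemma d1_one : d1 1 = 0 := by simp [d1]
lemma d2_one : d2 1 = 0 := by simp [d2]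
lemma neg_one_eq : (-1 : E) = (-1 : ℂ) • 1 := by module
lemma d1_neg_one : d1 (-1) = 0 := by rw [neg_one_eq, d1_smul, d1_one, smul_zero]
lemma d2_neg_one : d2 (-1) = 0 := by rw [neg_one_eq, d2_smul, d2_one, smul_zero]
lemma d1_mul (S T : E) : d1 (S * T) = d1 S * T + S * d1 T := by
  simp only [d1, mul_sub, sub_mul, mul_assoc]; abel
lemma d2_mul (S T : E) : d2 (S * T) = d2 S * T + S * d2 T := by
  simp only [d2, mul_sub, sub_mul, mul_assoc]; abel
lemma d1_opA : d1 opA = 0 := by simp [d1]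
lemma d2_opC : d2 opC = 0 := by simp [d2]
lemma d1_opC : d1 opC = 1 := comm_AC'
lemma d2_opA : d2 opA = -1 := by unfold d2; rw [← comm_AC']; abel
lemma d1_Xop : d1 Xop = 1 := by rw [Xop, d1_add, d1_opA, d1_opC]; abel
lemma d2_Xop : d2 Xop = -1 := by rw [Xop, d2_add, d2_opA, d2_opC]; abel
lemma d1_Nop : d1 Nop = opA := by
  rw [Nop, d1_mul, d1_opA, d1_opC]; simp
lemma d2_Nop : d2 Nop = -opC := by
  rw [Nop, d2_mul, d2_opA, d2_opC, neg_one_eq]; simp [smul_mul_assoc]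
lemma d1_d2 (T : E) : d1 (d2 T) = d2 (d1 T) := by
  rw [← sub_eq_zero]
  have : d1 (d2 T) - d2 (d1 T)
      = (opA * opC - opC * opA) * T - T * (opA * opC - opC * opA) := by
    simp only [d1, d2, mul_sub, sub_mul, mul_assoc]; abel
  rw [this, comm_AC']; simp

-- iterates
lemma d1_iter_zero (k : ℕ) : d1^[k] 0 = 0 := Function.iterate_fixed d1_zero k
lemma d2_iter_zero (k : ℕ) : d2^[k] 0 = 0 := Function.iterate_fixed d2_zero k
lemma d1_iter_add (k : ℕ) (S T : E) : d1^[k] (S + T) = d1^[k] S + d1^[k] T := by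
  induction k generalizing S T with
  | zero => simp
  | succ k ih => simp only [Function.iterate_succ_apply, d1_add, ih]
lemma d2_iter_add (k : ℕ) (S T : E) : d2^[k] (S + T) = d2^[k] S + d2^[k] T := by
  induction k generalizing S T with
  | zero => simp
  | succ k ih => simp only [Function.iterate_succ_apply, d2_add, ih]
lemma d1_iter_smul (k : ℕ) (c : ℂ) (T : E) : d1^[k] (c • T) = c • d1^[k] T := by
  induction k generalizing T with
  | zero => simp
  | succ k ih => simp only [Function.iterate_succ_apply, d1_smul, ih]
lemma d2_iter_smul (k : ℕ) (c : ℂ) (T : E) : d2^[k] (c • T) = c • d2^[k] T := by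
  induction k generalizing T with
  | zero => simp
  | succ k ih => simp only [Function.iterate_succ_apply, d2_smul, ih]
lemma d1_iter_d2 (k : ℕ) (T : E) : d1^[k] (d2 T) = d2 (d1^[k] T) := by
  induction k generalizing T with
  | zero => simp
  | succ k ih => simp only [Function.iterate_succ_apply, d1_d2, ih]

lemma dd_zz (T : E) : dd 0 0 T = T := rfl
lemma dd_zero (i j : ℕ) : dd i j 0 = 0 := by
  simp [dd, d1_iter_zero, d2_iter_zero]
lemma dd_add (i j : ℕ) (S T : E) : dd i j (S + T) = dd i j S + dd i j T := by
  simp [dd, d1_iter_add, d2_iter_add]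
lemma dd_sub (i j : ℕ) (S T : E) : dd i j (S - T) = dd i j S - dd i j T := by
  have h := dd_add i j (S - T) T; rw [sub_add_cancel] at h
  rw [h]; abel
lemma dd_smul (i j : ℕ) (c : ℂ) (T : E) : dd i j (c • T) = c • dd i j T := by
  simp [dd, d1_iter_smul, d2_iter_smul]
lemma dd_succ_left (i j : ℕ) (T : E) : dd (i+1) j T = d1 (dd i j T) := by
  simp [dd, Function.iterate_succ_apply']
lemma dd_succ_right (i j : ℕ) (T : E) : dd i (j+1) T = d2 (dd i j T) := by
  simp [dd, Function.iterate_succ_apply', d1_iter_d2]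
lemma dd_d1 (i j : ℕ) (T : E) : dd i j (d1 T) = dd (i+1) j T := by
  have h : d2^[j] (d1 T) = d1 (d2^[j] T) := by
    induction j with
    | zero => rfl
    | succ j ih => simp only [Function.iterate_succ_apply', ih, d1_d2]
  simp [dd, h, Function.iterate_succ_apply]
lemma dd_d2 (i j : ℕ) (T : E) : dd i j (d2 T) = dd i (j+1) T := by
  simp [dd, Function.iterate_succ_apply]

lemma d1_adN (S : E) : d1 (Nop*S - S*Nop) = Nop * d1 S - d1 S * Nop + d1 S := by
  simp only [d1_sub, d1_mul, d1_Nop]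
  simp only [d1]; abel
lemma d2_Nop' : d2 Nop = (-1:ℂ) • opC := by rw [d2_Nop]; module
lemma d2_adN (S : E) : d2 (Nop*S - S*Nop) = Nop * d2 S - d2 S * Nop - d2 S := by
  simp only [d2_sub, d2_mul, d2_Nop', smul_mul_assoc, mul_smul_comm]
  simp only [d2]
  match_scalars <;> ring
lemma d1_Xmul (S : E) : d1 (Xop*S) = Xop * d1 S + S := by
  rw [d1_mul, d1_Xop, one_mul]; abel
lemma d2_Xmul (S : E) : d2 (Xop*S) = Xop * d2 S - S := by
  rw [d2_mul, d2_Xop, neg_one_eq, smul_mul_assoc, one_mul]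
  match_scalars <;> ring
lemma d1_mulX (S : E) : d1 (S*Xop) = d1 S * Xop + S := by
  rw [d1_mul, d1_Xop, mul_one]
lemma d2_mulX (S : E) : d2 (S*Xop) = d2 S * Xop - S := by
  rw [d2_mul, d2_Xop, neg_one_eq, mul_smul_comm, mul_one]
  match_scalars <;> ring

lemma L_N (i j : ℕ) (T : E) :
    dd i j (Nop*T - T*Nop)
      = Nop * dd i j T - dd i j T * Nop + ((i:ℂ) - (j:ℂ)) • dd i j T := by
  induction i with
  | zero =>
    induction j with
    | zero =>
      rw [dd_zz, dd_zz]
      match_scalars <;> ring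
    | succ j ihj =>
      rw [dd_succ_right, ihj, d2_add, d2_adN, d2_smul]
      simp only [← dd_succ_right]
      push_cast
      match_scalars <;> ring
  | succ i ihi =>
    rw [dd_succ_left, ihi, d1_add, d1_adN, d1_smul]
    simp only [← dd_succ_left]
    push_cast
    match_scalars <;> ring

lemma L_Xl (i j : ℕ) (T : E) :
    dd i j (Xop * T)
      = Xop * dd i j T + (i:ℂ) • dd (i-1) j T - (j:ℂ) • dd i (j-1) T := by
  induction i with
  | zero =>
    induction j with
    | zero =>
      rw [dd_zz, dd_zz]
      match_scalars <;> ring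
    | succ j ihj =>
      rw [dd_succ_right, ihj, d2_sub, d2_add, d2_Xmul, d2_smul, d2_smul]
      simp only [← dd_succ_right]
      have hj : ((j:ℂ)) • dd 0 (j-1+1) T = (j:ℂ) • dd 0 j T := by
        cases j with
        | zero => simp
        | succ j' => norm_num
      rw [hj]
      push_cast
      try simp only [Nat.add_sub_cancel]
      match_scalars <;> ring
  | succ i ihi =>
    rw [dd_succ_left, ihi, d1_sub, d1_add, d1_Xmul, d1_smul, d1_smul]
    simp only [← dd_succ_left]
    have hi : ((i:ℂ)) • dd (i-1+1) j T = (i:ℂ) • dd i j T := by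
      cases i with
      | zero => simp
      | succ i' => norm_num
    rw [hi]
    push_cast
    try simp only [Nat.add_sub_cancel]
    match_scalars <;> ring

lemma L_Xr (i j : ℕ) (T : E) :
    dd i j (T * Xop)
      = dd i j T * Xop + (i:ℂ) • dd (i-1) j T - (j:ℂ) • dd i (j-1) T := by
  induction i with
  | zero =>
    induction j with
    | zero =>
      rw [dd_zz, dd_zz]
      match_scalars <;> ring
    | succ j ihj =>
      rw [dd_succ_right, ihj, d2_sub, d2_add, d2_mulX, d2_smul, d2_smul]
      simp only [← dd_succ_right]
      have hj : ((j:ℂ)) • dd 0 (j-1+1) T = (j:ℂ) • dd 0 j T := by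
        cases j with
        | zero => simp
        | succ j' => norm_num
      rw [hj]
      push_cast
      try simp only [Nat.add_sub_cancel]
      match_scalars <;> ring
  | succ i ihi =>
    rw [dd_succ_left, ihi, d1_sub, d1_add, d1_mulX, d1_smul, d1_smul]
    simp only [← dd_succ_left]
    have hi : ((i:ℂ)) • dd (i-1+1) j T = (i:ℂ) • dd i j T := by
      cases i with
      | zero => simp
      | succ i' => norm_num
    rw [hi]
    push_cast
    try simp only [Nat.add_sub_cancel]
    match_scalars <;> ring

lemma central_N {T : E} (h1 : d1 T = 0) (h2 : d2 T = 0) : Nop * T = T * Nop := by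
  have hA : opA * T = T * opA := sub_eq_zero.mp h1
  have hC : opC * T = T * opC := sub_eq_zero.mp h2
  rw [Nop, mul_assoc, hA, ← mul_assoc, hC, mul_assoc]
lemma central_X {T : E} (h1 : d1 T = 0) (h2 : d2 T = 0) : Xop * T = T * Xop := by
  have hA : opA * T = T * opA := sub_eq_zero.mp h1
  have hC : opC * T = T * opC := sub_eq_zero.mp h2
  rw [Xop, add_mul, mul_add, hA, hC]

lemma dd_one_high (i j : ℕ) (h : 1 ≤ i + j) : dd i j (1:E) = 0 := by
  cases j with
  | zero =>
    cases i with
    | zero => omega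
    | succ i' =>
      show d1^[i'+1] (d2^[0] 1) = 0
      simp [Function.iterate_succ_apply, d1_one, d1_iter_zero]
  | succ j' =>
    show d1^[i] (d2^[j'+1] (1:E)) = 0
    simp [Function.iterate_succ_apply, d2_one, d2_iter_zero, d1_iter_zero]

lemma dd_opA_high (i j : ℕ) (h : 2 ≤ i + j) : dd i j opA = 0 := by
  match j, i with
  | 0, 0 => omega
  | 0, 1 => omega
  | 0, (i'+2) =>
    show d1^[i'+2] (d2^[0] opA) = 0
    simp [Function.iterate_succ_apply, d1_opA, d1_iter_zero, d1_zero]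
  | 1, 0 => omega
  | 1, (i'+1) =>
    show d1^[i'+1] (d2^[1] opA) = 0
    simp [Function.iterate_succ_apply, d2_opA, d1_neg_one, d1_iter_zero]
  | (j'+2), i =>
    show d1^[i] (d2^[j'+2] opA) = 0
    simp [Function.iterate_succ_apply, d2_opA, d2_neg_one, d2_iter_zero, d1_iter_zero, d1_zero, d2_zero]

lemma dd_opC_high (i j : ℕ) (h : 2 ≤ i + j) : dd i j opC = 0 := by
  match i, j with
  | 0, 0 => omega
  | 0, 1 => omega
  | 0, (j'+2) =>
    show d1^[0] (d2^[j'+2] opC) = 0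
    simp [Function.iterate_succ_apply, d2_opC, d2_iter_zero, d2_zero]
  | 1, 0 => omega
  | 1, (j'+1) =>
    show d1^[1] (d2^[j'+1] opC) = 0
    simp [Function.iterate_succ_apply, d2_opC, d2_iter_zero, d1_zero]
  | (i'+2), j =>
    cases j with
    | zero =>
      show d1^[i'+2] (d2^[0] opC) = 0
      have h1 : d2^[0] opC = opC := rfl
      have h2 : d1^[i'+2] opC = d1^[i'+1] (d1 opC) := Function.iterate_succ_apply d1 (i'+1) opC
      rw [h1, h2, d1_opC]
      simp [Function.iterate_succ_apply, d1_one, d1_iter_zero, d1_zero]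
    | succ j' =>
      show d1^[i'+2] (d2^[j'+1] opC) = 0
      simp [Function.iterate_succ_apply, d2_opC, d2_iter_zero, d1_iter_zero, d1_zero, d2_zero]

lemma bound_mul (n : ℕ) : ∀ (S T : E) (Ls Lt : ℕ),
    (∀ i j, Ls ≤ i+j → dd i j S = 0) → (∀ i j, Lt ≤ i+j → dd i j T = 0) →
    ∀ i j, i + j = n → Ls + Lt ≤ n → dd i j (S*T) = 0 := by
  induction n using Nat.strong_induction_on with
  | _ n ih =>
    intro S T Ls Lt hS hT i j hij hn
    rcases Nat.eq_zero_or_pos Ls with h0|hLs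
    · have hS0 : S = 0 := by simpa [dd_zz] using hS 0 0 (by omega)
      simp [hS0, dd_zero]
    rcases Nat.eq_zero_or_pos Lt with h0|hLt
    · have hT0 : T = 0 := by simpa [dd_zz] using hT 0 0 (by omega)
      simp [hT0, dd_zero]
    cases i with
    | zero =>
      cases j with
      | zero => omega
      | succ j' =>
        have key : dd 0 (j'+1) (S*T) = dd 0 j' (d2 S * T) + dd 0 j' (S * d2 T) := by
          rw [← dd_d2, d2_mul, dd_add]
        have e1 := ih j' (by omega) (d2 S) T (Ls-1) Lt
          (fun a b hab => by rw [dd_d2]; exact hS a (b+1) (by omega)) hT 0 j' (by omega) (by omega)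
        have e2 := ih j' (by omega) S (d2 T) Ls (Lt-1)
          hS (fun a b hab => by rw [dd_d2]; exact hT a (b+1) (by omega)) 0 j' (by omega) (by omega)
        rw [key, e1, e2, add_zero]
    | succ i' =>
      have key : dd (i'+1) j (S*T) = dd i' j (d1 S * T) + dd i' j (S * d1 T) := by
        rw [← dd_d1, d1_mul, dd_add]
      have e1 := ih (i'+j) (by omega) (d1 S) T (Ls-1) Lt
        (fun a b hab => by rw [dd_d1]; exact hS (a+1) b (by omega)) hT i' j (by omega) (by omega)
      have e2 := ih (i'+j) (by omega) S (d1 T) Ls (Lt-1)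
        hS (fun a b hab => by rw [dd_d1]; exact hT (a+1) b (by omega)) i' j (by omega) (by omega)
      rw [key, e1, e2, add_zero]

theorem weyl_bound (T : E) (hT : T ∈ WeylAlg) : ∃ L, ∀ i j, L ≤ i + j → dd i j T = 0 := by
  induction hT using Algebra.adjoin_induction with
  | mem x hx =>
    refine ⟨2, ?_⟩
    rcases hx with h|h
    · subst h; exact fun i j hij => dd_opA_high i j hij
    · rw [Set.mem_singleton_iff] at h; subst h; exact fun i j hij => dd_opC_high i j hij
  | algebraMap r =>
    refine ⟨1, fun i j hij => ?_⟩
    rw [Algebra.algebraMap_eq_smul_one, dd_smul, dd_one_high i j hij, smul_zero]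
  | add x y hx hy ihx ihy =>
    obtain ⟨L1, h1⟩ := ihx; obtain ⟨L2, h2⟩ := ihy
    exact ⟨max L1 L2, fun i j hij => by
      rw [dd_add, h1 i j (by omega), h2 i j (by omega), add_zero]⟩
  | mul x y hx hy ihx ihy =>
    obtain ⟨L1, h1⟩ := ihx; obtain ⟨L2, h2⟩ := ihy
    exact ⟨L1 + L2, fun i j hij => bound_mul (i+j) x y L1 L2 h1 h2 i j rfl hij⟩

end RabiAux
end

set_option maxHeartbeats 2000000 in
/-- if `2ε ∉ ℤ` (and `g ≠ 0`), the only matrix `Q` with entries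
in the Weyl algebra satisfying `H̃^ε Q = Q H^ε` is `Q = 0`. -/
theorem no_solution_nonhalfinteger (g Δ ε : ℝ) (hg : g ≠ 0)
    (hε : ∀ n : ℤ, (2 * ε : ℝ) ≠ (n : ℝ))
    (α β γ δ : E) (hα : α ∈ WeylAlg) (hβ : β ∈ WeylAlg)
    (hγ : γ ∈ WeylAlg) (hδ : δ ∈ WeylAlg)
    (hQ : Hop (-g) Δ ε * !![α, β; γ, δ] = !![α, β; γ, δ] * Hop g Δ ε) :
    (!![α, β; γ, δ] : M2) = 0 := by
  classical
  open RabiAux in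
  -- extract the four entry equations
  have h00 : (Hop (-g) Δ ε * !![α, β; γ, δ]) 0 0 = (!![α, β; γ, δ] * Hop g Δ ε) 0 0 := by rw [hQ]
  have h01 : (Hop (-g) Δ ε * !![α, β; γ, δ]) 0 1 = (!![α, β; γ, δ] * Hop g Δ ε) 0 1 := by rw [hQ]
  have h10 : (Hop (-g) Δ ε * !![α, β; γ, δ]) 1 0 = (!![α, β; γ, δ] * Hop g Δ ε) 1 0 := by rw [hQ]
  have h11 : (Hop (-g) Δ ε * !![α, β; γ, δ]) 1 1 = (!![α, β; γ, δ] * Hop g Δ ε) 1 1 := by rw [hQ]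
  simp [Hop, Matrix.mul_apply, Fin.sum_univ_two] at h00 h01 h10 h11
  simp only [add_mul, mul_add, sub_mul, mul_sub, neg_mul, mul_neg, smul_mul_assoc,
    mul_smul_comm, one_mul, mul_one, ← Complex.coe_smul, ← neg_smul] at h00 h01 h10 h11
  have E1 : (Nop*α - α*Nop) - (g:ℂ)•(Xop*α) - (g:ℂ)•(α*Xop) = (Δ:ℂ)•β - (Δ:ℂ)•γ := by
    simp only [Nop, Xop, add_mul, mul_add, smul_add]
    linear_combination (norm := module) h00
  have E2 : (Nop*β - β*Nop) - (g:ℂ)•(Xop*β) + (g:ℂ)•(β*Xop) + (2*(ε:ℂ))•β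
      = (Δ:ℂ)•α - (Δ:ℂ)•δ := by
    simp only [Nop, Xop, add_mul, mul_add, smul_add]
    linear_combination (norm := module) h01
  have E3 : (Nop*γ - γ*Nop) + (g:ℂ)•(Xop*γ) - (g:ℂ)•(γ*Xop) - (2*(ε:ℂ))•γ
      = (Δ:ℂ)•δ - (Δ:ℂ)•α := by
    simp only [Nop, Xop, add_mul, mul_add, smul_add]
    linear_combination (norm := module) h10
  have E4 : (Nop*δ - δ*Nop) + (g:ℂ)•(Xop*δ) + (g:ℂ)•(δ*Xop) = (Δ:ℂ)•γ - (Δ:ℂ)•β := by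
    simp only [Nop, Xop, add_mul, mul_add, smul_add]
    linear_combination (norm := module) h11
  -- the downward induction property
  set P : ℕ → Prop := fun n => ∀ i j : ℕ, i + j = n →
    dd i j α = 0 ∧ dd i j β = 0 ∧ dd i j γ = 0 ∧ dd i j δ = 0 with hP
  have step : ∀ ℓ : ℕ, P (ℓ+1) → P ℓ := by
    intro ℓ IH
    have relα : ∀ a b : ℕ, a + b = ℓ + 1 →
        (a:ℂ) • dd (a-1) b α = (b:ℂ) • dd a (b-1) α := by
      intro a b hab
      have h := congrArg (dd a b) E1
      rw [dd_sub, dd_sub, L_N, dd_smul, L_Xl, dd_smul, L_Xr, dd_sub, dd_smul, dd_smul] at h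
      rw [(IH a b hab).1, (IH a b hab).2.1, (IH a b hab).2.2.1] at h
      simp only [mul_zero, zero_mul, smul_zero, add_zero, zero_add, sub_zero, zero_sub,
        sub_self, neg_zero, zero_smul] at h
      have h2 : ((2:ℂ) * (g:ℂ)) • ((a:ℂ) • dd (a-1) b α - (b:ℂ) • dd a (b-1) α) = 0 := by
        linear_combination (norm := module) -h
      have h3 := (smul_eq_zero.mp h2).resolve_left (by
        simp [Complex.ofReal_ne_zero, hg])
      exact sub_eq_zero.mp h3
    have relδ : ∀ a b : ℕ, a + b = ℓ + 1 →
        (a:ℂ) • dd (a-1) b δ = (b:ℂ) • dd a (b-1) δ := by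
      intro a b hab
      have h := congrArg (dd a b) E4
      rw [dd_add, dd_add, L_N, dd_smul, L_Xl, dd_smul, L_Xr, dd_sub, dd_smul, dd_smul] at h
      rw [(IH a b hab).2.2.2, (IH a b hab).2.1, (IH a b hab).2.2.1] at h
      simp only [mul_zero, zero_mul, smul_zero, add_zero, zero_add, sub_zero, zero_sub,
        sub_self, neg_zero, zero_smul] at h
      have h2 : ((2:ℂ) * (g:ℂ)) • ((a:ℂ) • dd (a-1) b δ - (b:ℂ) • dd a (b-1) δ) = 0 := by
        linear_combination (norm := module) h
      have h3 := (smul_eq_zero.mp h2).resolve_left (by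
        simp [Complex.ofReal_ne_zero, hg])
      exact sub_eq_zero.mp h3
    have clα : ∀ j i : ℕ, i + j = ℓ → dd i j α = 0 := by
      intro j
      induction j with
      | zero =>
        intro i hi
        have h := relα (i+1) 0 (by omega)
        simp only [Nat.add_sub_cancel, Nat.cast_zero, zero_smul] at h
        exact (smul_eq_zero.mp h).resolve_left
          (Nat.cast_ne_zero.mpr (Nat.succ_ne_zero i))
      | succ j ihj =>
        intro i hi
        have h := relα (i+1) (j+1) (by omega)
        simp only [Nat.add_sub_cancel] at h
        rw [ihj (i+1) (by omega), smul_zero] at h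
        exact (smul_eq_zero.mp h).resolve_left
          (Nat.cast_ne_zero.mpr (Nat.succ_ne_zero i))
    have clδ : ∀ j i : ℕ, i + j = ℓ → dd i j δ = 0 := by
      intro j
      induction j with
      | zero =>
        intro i hi
        have h := relδ (i+1) 0 (by omega)
        simp only [Nat.add_sub_cancel, Nat.cast_zero, zero_smul] at h
        exact (smul_eq_zero.mp h).resolve_left
          (Nat.cast_ne_zero.mpr (Nat.succ_ne_zero i))
      | succ j ihj =>
        intro i hi
        have h := relδ (i+1) (j+1) (by omega)
        simp only [Nat.add_sub_cancel] at h
        rw [ihj (i+1) (by omega), smul_zero] at h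
        exact (smul_eq_zero.mp h).resolve_left
          (Nat.cast_ne_zero.mpr (Nat.succ_ne_zero i))
    intro i j hij
    have hzα := clα j i hij
    have hzδ := clδ j i hij
    have hd1β : d1 (dd i j β) = 0 := by
      rw [← dd_succ_left]; exact (IH (i+1) j (by omega)).2.1
    have hd2β : d2 (dd i j β) = 0 := by
      rw [← dd_succ_right]; exact (IH i (j+1) (by omega)).2.1
    have hd1γ : d1 (dd i j γ) = 0 := by
      rw [← dd_succ_left]; exact (IH (i+1) j (by omega)).2.2.1
    have hd2γ : d2 (dd i j γ) = 0 := by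
      rw [← dd_succ_right]; exact (IH i (j+1) (by omega)).2.2.1
    have hβ0 : dd i j β = 0 := by
      have h := congrArg (dd i j) E2
      rw [dd_add, dd_add, dd_sub, L_N, dd_smul, L_Xl, dd_smul, L_Xr, dd_smul,
        dd_sub, dd_smul, dd_smul] at h
      rw [hzα, hzδ, central_N hd1β hd2β, central_X hd1β hd2β] at h
      simp only [smul_zero, sub_self] at h
      have h2 : (((i:ℂ) - (j:ℂ)) + 2*(ε:ℂ)) • dd i j β = 0 := by
        linear_combination (norm := module) h
      refine (smul_eq_zero.mp h2).resolve_left ?_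
      intro hc
      have hre : (i:ℝ) - (j:ℝ) + 2*ε = 0 := by exact_mod_cast hc
      exact hε ((j:ℤ) - (i:ℤ)) (by push_cast; linarith)
    have hγ0 : dd i j γ = 0 := by
      have h := congrArg (dd i j) E3
      rw [dd_sub, dd_sub, dd_add, L_N, dd_smul, L_Xl, dd_smul, L_Xr, dd_smul,
        dd_sub, dd_smul, dd_smul] at h
      rw [hzα, hzδ, central_N hd1γ hd2γ, central_X hd1γ hd2γ] at h
      simp only [smul_zero, sub_self] at h
      have h2 : (((i:ℂ) - (j:ℂ)) - 2*(ε:ℂ)) • dd i j γ = 0 := by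
        linear_combination (norm := module) h
      refine (smul_eq_zero.mp h2).resolve_left ?_
      intro hc
      have hre : (i:ℝ) - (j:ℝ) - 2*ε = 0 := by exact_mod_cast hc
      exact hε ((i:ℤ) - (j:ℤ)) (by push_cast; linarith)
    exact ⟨hzα, hβ0, hγ0, hzδ⟩
  obtain ⟨La, hLa⟩ := weyl_bound α hα
  obtain ⟨Lb, hLb⟩ := weyl_bound β hβ
  obtain ⟨Lc, hLc⟩ := weyl_bound γ hγ
  obtain ⟨Ld, hLd⟩ := weyl_bound δ hδ
  have hLa' : La ≤ max (max La Lb) (max Lc Ld) := le_trans (le_max_left _ _) (le_max_left _ _)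
  have hLb' : Lb ≤ max (max La Lb) (max Lc Ld) := le_trans (le_max_right _ _) (le_max_left _ _)
  have hLc' : Lc ≤ max (max La Lb) (max Lc Ld) := le_trans (le_max_left _ _) (le_max_right _ _)
  have hLd' : Ld ≤ max (max La Lb) (max Lc Ld) := le_trans (le_max_right _ _) (le_max_right _ _)
  have base : P (max (max La Lb) (max Lc Ld)) := by
    intro i j hij
    exact ⟨hLa i j (by omega), hLb i j (by omega), hLc i j (by omega), hLd i j (by omega)⟩
  have down : ∀ n : ℕ, P n → P 0 := by
    intro n
    induction n with
    | zero => exact id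
    | succ n ihn => exact fun h => ihn (step n h)
  obtain ⟨e1, e2, e3, e4⟩ := down _ base 0 0 rfl
  rw [dd_zz] at e1 e2 e3 e4
  subst e1; subst e2; subst e3; subst e4
  ext i j
  fin_cases i <;> fin_cases j <;> simp
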